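/- Define g : ℝ × P(ℝ) → ℝ by g(x,m) = (x − ∫ y dm(y))² for m with finite first moment. Then for every probability space (Ω, F, ℙ) and all square-integrable real random variables ξ, ξ' on it, E[g(ξ', law(ξ')) + g(ξ, law(ξ)) − g(ξ, law(ξ')) − g(ξ', law(ξ))] = −2·(E[ξ] − E[ξ'])². In particular, whenever E[ξ] ≠ E[ξ'] this quantity is strictly negative, so g fails the Lasry–Lions monotonicity condition, even though x ↦ g(x,m) is convex for each m. -/

import Mathlib

open MeasureTheory

/-- The terminal cost `g(x,m) = (x - ∫ y dm(y))²`. -/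
noncomputable def gQuad (x : ℝ) (m : Measure ℝ) : ℝ := (x - ∫ y, y ∂m) ^ 2

lemma integrable_of_sq {Ω : Type*} {mΩ : MeasurableSpace Ω} {P : Measure Ω}
    [IsProbabilityMeasure P] {f : Ω → ℝ} (hf : Measurable f)
    (hsq : Integrable (fun ω => f ω ^ 2) P) : Integrable f P := by
  have h2 : MemLp f 2 P := by
    rw [memLp_two_iff_integrable_sq hf.aestronglyMeasurable]
    exact hsq
  exact h2.integrable (by norm_num)

lemma convexOn_sq_sub (c : ℝ) : ConvexOn ℝ Set.univ (fun x : ℝ => (x - c) ^ 2) := by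
  have h := (Even.convexOn_pow (n := 2) (by norm_num)).comp_affineMap
    (AffineMap.id ℝ ℝ - AffineMap.const ℝ ℝ c)
  simpa [Function.comp_def] using h

/-- for `g(x,m) = (x - ∫ y dm(y))²`, the Lasry–Lions monotonicity expression
equals `-2(E[ξ] - E[ξ'])²`; in particular it is strictly negative when `E[ξ] ≠ E[ξ']`,
so `g` fails the Lasry–Lions monotonicity condition, even though `x ↦ g(x,m)` is convex. -/
theorem gQuad_fails_lasry_lions
    (Ω : Type*) (mΩ : MeasurableSpace Ω) (P : Measure Ω) (hP : IsProbabilityMeasure P)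
    (ξ ξ' : Ω → ℝ) (hξ : Measurable ξ) (hξ' : Measurable ξ')
    (hsq : Integrable (fun ω => ξ ω ^ 2) P) (hsq' : Integrable (fun ω => ξ' ω ^ 2) P) :
    (∫ ω, (gQuad (ξ' ω) (P.map ξ') + gQuad (ξ ω) (P.map ξ)
        - gQuad (ξ ω) (P.map ξ') - gQuad (ξ' ω) (P.map ξ)) ∂P
      = -2 * ((∫ ω, ξ ω ∂P) - ∫ ω, ξ' ω ∂P) ^ 2) ∧
    ((∫ ω, ξ ω ∂P) ≠ (∫ ω, ξ' ω ∂P) →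
      ∫ ω, (gQuad (ξ' ω) (P.map ξ') + gQuad (ξ ω) (P.map ξ)
        - gQuad (ξ ω) (P.map ξ') - gQuad (ξ' ω) (P.map ξ)) ∂P < 0) ∧
    (∀ m : Measure ℝ, ConvexOn ℝ Set.univ (fun x => gQuad x m)) := by
  have hi : Integrable ξ P := integrable_of_sq hξ hsq
  have hi' : Integrable ξ' P := integrable_of_sq hξ' hsq'
  set a := ∫ ω, ξ ω ∂P with ha
  set b := ∫ ω, ξ' ω ∂P with hb
  have hma : (∫ y, y ∂(P.map ξ)) = a := by
    exact integral_map hξ.aemeasurable aestronglyMeasurable_id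
  have hmb : (∫ y, y ∂(P.map ξ')) = b := by
    exact integral_map hξ'.aemeasurable aestronglyMeasurable_id
  have key : ∫ ω, (gQuad (ξ' ω) (P.map ξ') + gQuad (ξ ω) (P.map ξ)
        - gQuad (ξ ω) (P.map ξ') - gQuad (ξ' ω) (P.map ξ)) ∂P
      = -2 * (a - b) ^ 2 := by
    have hpt : ∀ ω, gQuad (ξ' ω) (P.map ξ') + gQuad (ξ ω) (P.map ξ)
        - gQuad (ξ ω) (P.map ξ') - gQuad (ξ' ω) (P.map ξ)
        = 2 * (a - b) * (ξ' ω - ξ ω) := by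
      intro ω
      simp only [gQuad, hma, hmb]
      ring
    calc ∫ ω, (gQuad (ξ' ω) (P.map ξ') + gQuad (ξ ω) (P.map ξ)
        - gQuad (ξ ω) (P.map ξ') - gQuad (ξ' ω) (P.map ξ)) ∂P
        = ∫ ω, 2 * (a - b) * (ξ' ω - ξ ω) ∂P := by
          exact integral_congr_ae (Filter.Eventually.of_forall hpt)
      _ = 2 * (a - b) * ∫ ω, (ξ' ω - ξ ω) ∂P := integral_const_mul _ _
      _ = 2 * (a - b) * (b - a) := by rw [integral_sub hi' hi]
      _ = -2 * (a - b) ^ 2 := by ring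
  refine ⟨key, ?_, ?_⟩
  · intro hne
    rw [key]
    have h0 : a - b ≠ 0 := sub_ne_zero.mpr hne
    have hpos : 0 < (a - b) ^ 2 :=
      lt_of_le_of_ne (sq_nonneg _) (Ne.symm (pow_ne_zero 2 h0))
    linarith
  · intro m
    simpa [gQuad] using convexOn_sq_sub (∫ y, y ∂m)
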